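/- Let σ be a protagonist strategy in an initialized generalised safety/reachability game. Then σ is not admissible if and only if there exists a history h compatible with σ such that aVal(h, σ) ≤ cVal(h, σ) ≤ aVal(h) ≤ acVal(h) and at least one of these three inequalities is strict. -/

import Mathlib

open scoped Classical

/-- A generalised safety/reachability game: a finite directed graph where every vertex has a
successor, a set `protag` of protagonist vertices (the rest belong to the antagonist), a set
`leaf` of leaves (each equipped with exactly a self-loop), an integer payoff attached to each
leaf, and an initial vertex `v0`. -/
structure GSRGame where
  V : Type
  fin : Finite V
  E : V → V → Prop
  succ_exists : ∀ v : V, ∃ w : V, E v w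
  protag : V → Prop
  leaf : V → Prop
  leaf_loop : ∀ v w : V, leaf v → (E v w ↔ w = v)
  pay : V → ℤ
  v0 : V

namespace GSRGame

variable (g : GSRGame)

/-- A strategy: to each nonempty history it assigns a successor of the last vertex.
(A protagonist strategy is only ever consulted at histories ending in a protagonist vertex,
an antagonist strategy at histories ending in an antagonist vertex.) -/
structure Strat where
  act : List g.V → g.V
  valid : ∀ (h : List g.V) (hne : h ≠ []), g.E (h.getLast hne) (act h)

/-- One step of the play extending history `h`: the protagonist moves according to `σ` at
protagonist vertices, the antagonist according to `τ` elsewhere. -/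
noncomputable def step (σ τ : g.Strat) (h : List g.V) : List g.V :=
  h ++ [if g.protag (h.getLastD g.v0) then σ.act h else τ.act h]

/-- The history obtained after `k` steps of play by `(σ, τ)` extending `h`. -/
noncomputable def playList (σ τ : g.Strat) (h : List g.V) : ℕ → List g.V
  | 0 => h
  | k + 1 => g.step σ τ (playList σ τ h k)

/-- The outcome (infinite path) induced by `(σ, τ)` from the history `h`. -/
noncomputable def play (σ τ : g.Strat) (h : List g.V) (k : ℕ) : g.V :=
  (g.playList σ τ h k).getLastD g.v0

/-- The payoff of an outcome: the payoff of the leaf it reaches, and `0` if it reaches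
no leaf. -/
noncomputable def payoffOf (ρ : ℕ → g.V) : ℤ :=
  if hx : ∃ k : ℕ, g.leaf (ρ k) then g.pay (ρ (Nat.find hx)) else 0

/-- The payoff `p(h, σ, τ)` of the outcome induced by `(σ, τ)` from the history `h`. -/
noncomputable def pval (σ τ : g.Strat) (h : List g.V) : ℤ :=
  g.payoffOf (g.play σ τ h)

/-- `h` is a history (a nonempty path starting at `v0`) compatible with the protagonist
strategy `σ`: every protagonist move along `h` agrees with `σ`. -/
def Compat (σ : g.Strat) (h : List g.V) : Prop :=
  h ≠ [] ∧ h.head? = some g.v0 ∧ List.Chain' g.E h ∧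
    ∀ (p : List g.V) (v : g.V), (p ++ [v]) <+: h → p ≠ [] →
      g.protag (p.getLastD g.v0) → σ.act p = v

/-- The cooperative value `cVal(h, σ)`. -/
noncomputable def cVal (σ : g.Strat) (h : List g.V) : ℤ :=
  sSup {z : ℤ | ∃ τ : g.Strat, z = g.pval σ τ h}

/-- The antagonistic value `aVal(h, σ)`. -/
noncomputable def aVal (σ : g.Strat) (h : List g.V) : ℤ :=
  sInf {z : ℤ | ∃ τ : g.Strat, z = g.pval σ τ h}

/-- The antagonistic value `aVal(h)` of a history. -/
noncomputable def aValH (h : List g.V) : ℤ :=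
  sSup {z : ℤ | ∃ σ : g.Strat, z = g.aVal σ h}

/-- The antagonistic-cooperative value `acVal(h)` of a history. -/
noncomputable def acVal (h : List g.V) : ℤ :=
  sSup {z : ℤ | ∃ σ : g.Strat, g.aValH h ≤ g.aVal σ h ∧ z = g.cVal σ h}

/-- Weak dominance `σ ⪯ σ'` (from the initial vertex `v0`). -/
def Dom (σ σ' : g.Strat) : Prop :=
  ∀ τ : g.Strat, g.pval σ τ [g.v0] ≤ g.pval σ' τ [g.v0]

/-- Dominance `σ ≺ σ'`. -/
def SDom (σ σ' : g.Strat) : Prop :=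
  g.Dom σ σ' ∧ ∃ τ : g.Strat, g.pval σ τ [g.v0] < g.pval σ' τ [g.v0]

/-- Admissibility: `σ` is dominated by no strategy. -/
def Admissible (σ : g.Strat) : Prop := ¬ ∃ σ' : g.Strat, g.SDom σ σ'

/-- `h` is a witness of non-dominance of `σ₁` by `σ₂`. -/
def NonDomWitness (σ₁ σ₂ : g.Strat) (h : List g.V) : Prop :=
  g.Compat σ₁ h ∧ g.Compat σ₂ h ∧ g.protag (h.getLastD g.v0) ∧
    σ₁.act h ≠ σ₂.act h ∧ g.aVal σ₂ h < g.cVal σ₁ h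

/-- `h` is a witness of non-admissibility of `σ`. -/
def NonAdmWitness (σ : g.Strat) (h : List g.V) : Prop :=
  g.Compat σ h ∧
    g.aVal σ h ≤ g.cVal σ h ∧ g.cVal σ h ≤ g.aValH h ∧ g.aValH h ≤ g.acVal h ∧
    (g.aVal σ h < g.cVal σ h ∨ g.cVal σ h < g.aValH h ∨ g.aValH h < g.acVal h)


section Aux
variable (g : GSRGame)

lemma getLastD_eq_getLast {α : Type*} (l : List α) (hne : l ≠ []) (d : α) :
    l.getLastD d = l.getLast hne := by
  cases l with
  | nil => exact absurd rfl hne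
  | cons a t => rw [List.getLast_eq_getLastD, List.getLastD_cons]

noncomputable def defStrat : g.Strat :=
  ⟨fun l => Classical.choose (g.succ_exists (l.getLastD g.v0)), fun l hne => by
    rw [← getLastD_eq_getLast l hne g.v0]
    exact Classical.choose_spec (g.succ_exists (l.getLastD g.v0))⟩

instance : Nonempty g.Strat := ⟨g.defStrat⟩

def payVals : Set ℤ := insert 0 (Set.range g.pay)

lemma payVals_finite : g.payVals.Finite := by
  haveI := g.fin
  exact (Set.finite_range g.pay).insert 0

lemma pval_mem (σ τ : g.Strat) (h : List g.V) : g.pval σ τ h ∈ g.payVals := by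
  unfold pval payoffOf
  split
  · exact Set.mem_insert_of_mem _ ⟨_, rfl⟩
  · exact Set.mem_insert _ _

lemma playList_succ (σ τ : g.Strat) (h : List g.V) (k : ℕ) :
    g.playList σ τ h (k+1) = g.playList σ τ h k ++
      [if g.protag ((g.playList σ τ h k).getLastD g.v0) then σ.act (g.playList σ τ h k)
       else τ.act (g.playList σ τ h k)] := rfl

lemma playList_length (σ τ : g.Strat) (h : List g.V) (k : ℕ) :
    (g.playList σ τ h k).length = h.length + k := by
  induction k with
  | zero => rfl
  | succ k ih => rw [playList_succ, List.length_append, ih]; simp; ring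

lemma playList_ne_nil (σ τ : g.Strat) {h : List g.V} (hne : h ≠ []) (k : ℕ) :
    g.playList σ τ h k ≠ [] := by
  cases k with
  | zero => exact hne
  | succ k => rw [playList_succ]; simp

lemma playList_prefix_succ (σ τ : g.Strat) (h : List g.V) (k : ℕ) :
    g.playList σ τ h k <+: g.playList σ τ h (k+1) := by
  rw [playList_succ]; exact ⟨_, rfl⟩

lemma playList_prefix_mono (σ τ : g.Strat) (h : List g.V) {j k : ℕ} (hjk : j ≤ k) :
    g.playList σ τ h j <+: g.playList σ τ h k := by
  induction k with
  | zero => simp_all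
  | succ k ih =>
    rcases Nat.lt_or_ge j (k+1) with hl | hl
    · exact (ih (Nat.lt_succ_iff.mp hl)).trans (g.playList_prefix_succ σ τ h k)
    · have : j = k + 1 := le_antisymm hjk hl
      subst this; exact List.prefix_refl _

lemma prefix_eq_of_length {α : Type*} {l₁ l₂ L : List α} (h₁ : l₁ <+: L) (h₂ : l₂ <+: L)
    (hl : l₁.length = l₂.length) : l₁ = l₂ := by
  rw [List.prefix_iff_eq_take.mp h₁, List.prefix_iff_eq_take.mp h₂, hl]

lemma prefix_playList (σ τ : g.Strat) {h l : List g.V} {k : ℕ} (hp : l <+: g.playList σ τ h k)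
    (hl : h.length ≤ l.length) : l = g.playList σ τ h (l.length - h.length) := by
  have hlen : l.length ≤ h.length + k := by
    have := hp.length_le; rwa [playList_length] at this
  refine prefix_eq_of_length hp (g.playList_prefix_mono σ τ h (k := k) (by omega)) ?_
  rw [playList_length]; omega

lemma playList_add (σ τ : g.Strat) (h : List g.V) (n k : ℕ) :
    g.playList σ τ h (n + k) = g.playList σ τ (g.playList σ τ h n) k := by
  induction k with
  | zero => rfl
  | succ k ih => rw [← Nat.add_assoc, playList_succ, ih]; rfl

end Aux

section Aux2
variable (g : GSRGame)

lemma play_succ (σ τ : g.Strat) (h : List g.V) (k : ℕ) :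
    g.play σ τ h (k+1) = (if g.protag (g.play σ τ h k) then σ.act (g.playList σ τ h k)
      else τ.act (g.playList σ τ h k)) := by
  unfold play
  rw [playList_succ, List.getLastD_concat]

lemma play_leaf_const (σ τ : g.Strat) {h : List g.V} (hne : h ≠ []) (k : ℕ)
    (hl : g.leaf (g.play σ τ h k)) : g.play σ τ h (k+1) = g.play σ τ h k := by
  have hpe := g.playList_ne_nil σ τ hne k
  have hv : g.E (g.play σ τ h k) (g.play σ τ h (k+1)) := by
    rw [play_succ]
    unfold play
    rw [getLastD_eq_getLast _ hpe g.v0]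
    split
    · exact σ.valid _ hpe
    · exact τ.valid _ hpe
  exact (g.leaf_loop _ _ hl).mp hv

lemma payoffOf_shift (ρ : ℕ → g.V) (hconst : ∀ k, g.leaf (ρ k) → ρ (k+1) = ρ k) (n : ℕ) :
    g.payoffOf (fun k => ρ (n + k)) = g.payoffOf ρ := by
  have mono : ∀ j, g.leaf (ρ j) → ∀ m, j ≤ m → ρ m = ρ j := by
    intro j hj m hm
    induction m, hm using Nat.le_induction with
    | base => rfl
    | succ m hm ih => rw [hconst m (ih ▸ hj), ih]
  unfold payoffOf
  by_cases hx : ∃ k, g.leaf (ρ k)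
  · rw [dif_pos hx]
    have hj : g.leaf (ρ (Nat.find hx)) := Nat.find_spec hx
    have hx' : ∃ k, g.leaf (ρ (n + k)) := by
      rcases Nat.le_total n (Nat.find hx) with hnj | hjn
      · exact ⟨Nat.find hx - n, by rwa [Nat.add_sub_cancel' hnj]⟩
      · exact ⟨0, by rw [Nat.add_zero, mono _ hj n hjn]; exact hj⟩
    rw [dif_pos hx']
    have h1 : Nat.find hx ≤ n + Nat.find hx' := by
      by_contra hc
      push_neg at hc
      exact Nat.find_min hx hc (Nat.find_spec hx')
    show g.pay (ρ (n + Nat.find hx')) = _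
    rw [mono _ hj _ h1]
  · rw [dif_neg hx, dif_neg (by rintro ⟨k, hk⟩; exact hx ⟨n + k, hk⟩)]

lemma pval_playList (σ τ : g.Strat) {h : List g.V} (hne : h ≠ []) (n : ℕ) :
    g.pval σ τ (g.playList σ τ h n) = g.pval σ τ h := by
  unfold pval
  have heq : g.play σ τ (g.playList σ τ h n) = fun k => g.play σ τ h (n + k) := by
    funext k
    unfold play
    rw [← playList_add]
  rw [heq]
  exact g.payoffOf_shift _ (fun k => g.play_leaf_const σ τ hne k) n

lemma playList_congr {σ₁ σ₂ τ₁ τ₂ : g.Strat} {h : List g.V}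
    (hσ : ∀ k, g.protag ((g.playList σ₁ τ₁ h k).getLastD g.v0) →
      σ₂.act (g.playList σ₁ τ₁ h k) = σ₁.act (g.playList σ₁ τ₁ h k))
    (hτ : ∀ k, ¬ g.protag ((g.playList σ₁ τ₁ h k).getLastD g.v0) →
      τ₂.act (g.playList σ₁ τ₁ h k) = τ₁.act (g.playList σ₁ τ₁ h k)) :
    ∀ k, g.playList σ₂ τ₂ h k = g.playList σ₁ τ₁ h k := by
  intro k
  induction k with
  | zero => rfl
  | succ k ih =>
    rw [playList_succ, playList_succ, ih]
    by_cases hp : g.protag ((g.playList σ₁ τ₁ h k).getLastD g.v0)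
    · rw [if_pos hp, if_pos hp, hσ k hp]
    · rw [if_neg hp, if_neg hp, hτ k hp]

lemma pval_congr {σ₁ σ₂ τ₁ τ₂ : g.Strat} {h : List g.V}
    (hσ : ∀ k, g.protag ((g.playList σ₁ τ₁ h k).getLastD g.v0) →
      σ₂.act (g.playList σ₁ τ₁ h k) = σ₁.act (g.playList σ₁ τ₁ h k))
    (hτ : ∀ k, ¬ g.protag ((g.playList σ₁ τ₁ h k).getLastD g.v0) →
      τ₂.act (g.playList σ₁ τ₁ h k) = τ₁.act (g.playList σ₁ τ₁ h k)) :
    g.pval σ₂ τ₂ h = g.pval σ₁ τ₁ h := by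
  unfold pval
  congr 1
  funext k
  unfold play
  rw [g.playList_congr hσ hτ k]

lemma pvalSet_nonempty (σ : g.Strat) (h : List g.V) :
    {z : ℤ | ∃ τ : g.Strat, z = g.pval σ τ h}.Nonempty := ⟨_, g.defStrat, rfl⟩

lemma pvalSet_finite (σ : g.Strat) (h : List g.V) :
    {z : ℤ | ∃ τ : g.Strat, z = g.pval σ τ h}.Finite :=
  g.payVals_finite.subset (by rintro z ⟨τ, rfl⟩; exact g.pval_mem σ τ h)

lemma cVal_exists (σ : g.Strat) (h : List g.V) : ∃ τ, g.cVal σ h = g.pval σ τ h :=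
  (g.pvalSet_nonempty σ h).csSup_mem (g.pvalSet_finite σ h)

lemma aVal_exists (σ : g.Strat) (h : List g.V) : ∃ τ, g.aVal σ h = g.pval σ τ h :=
  (g.pvalSet_nonempty σ h).csInf_mem (g.pvalSet_finite σ h)

lemma pval_le_cVal (σ τ : g.Strat) (h : List g.V) : g.pval σ τ h ≤ g.cVal σ h :=
  le_csSup (g.pvalSet_finite σ h).bddAbove ⟨τ, rfl⟩

lemma aVal_le_pval (σ τ : g.Strat) (h : List g.V) : g.aVal σ h ≤ g.pval σ τ h :=
  csInf_le (g.pvalSet_finite σ h).bddBelow ⟨τ, rfl⟩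

lemma aVal_le_cVal (σ : g.Strat) (h : List g.V) : g.aVal σ h ≤ g.cVal σ h := by
  obtain ⟨τ, hτ⟩ := g.cVal_exists σ h
  rw [hτ]
  exact g.aVal_le_pval σ τ h

lemma aValSet_nonempty (h : List g.V) :
    {z : ℤ | ∃ σ : g.Strat, z = g.aVal σ h}.Nonempty := ⟨_, g.defStrat, rfl⟩

lemma aValSet_finite (h : List g.V) :
    {z : ℤ | ∃ σ : g.Strat, z = g.aVal σ h}.Finite :=
  g.payVals_finite.subset (by
    rintro z ⟨σ, rfl⟩
    obtain ⟨τ, hτ⟩ := g.aVal_exists σ h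
    rw [hτ]
    exact g.pval_mem σ τ h)

lemma aVal_le_aValH (σ : g.Strat) (h : List g.V) : g.aVal σ h ≤ g.aValH h :=
  le_csSup (g.aValSet_finite h).bddAbove ⟨σ, rfl⟩

lemma aValH_exists (h : List g.V) : ∃ σ, g.aValH h = g.aVal σ h :=
  (g.aValSet_nonempty h).csSup_mem (g.aValSet_finite h)

lemma acValSet_nonempty (h : List g.V) :
    {z : ℤ | ∃ σ : g.Strat, g.aValH h ≤ g.aVal σ h ∧ z = g.cVal σ h}.Nonempty := by
  obtain ⟨σ, hσ⟩ := g.aValH_exists h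
  exact ⟨_, σ, le_of_eq hσ, rfl⟩

lemma acValSet_finite (h : List g.V) :
    {z : ℤ | ∃ σ : g.Strat, g.aValH h ≤ g.aVal σ h ∧ z = g.cVal σ h}.Finite :=
  g.payVals_finite.subset (by
    rintro z ⟨σ, _, rfl⟩
    obtain ⟨τ, hτ⟩ := g.cVal_exists σ h
    rw [hτ]
    exact g.pval_mem σ τ h)

lemma acVal_exists (h : List g.V) :
    ∃ σ, g.aValH h ≤ g.aVal σ h ∧ g.acVal h = g.cVal σ h :=
  (g.acValSet_nonempty h).csSup_mem (g.acValSet_finite h)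

lemma cVal_le_acVal {σ : g.Strat} {h : List g.V} (hs : g.aValH h ≤ g.aVal σ h) :
    g.cVal σ h ≤ g.acVal h :=
  le_csSup (g.acValSet_finite h).bddAbove ⟨σ, hs, rfl⟩

lemma aValH_le_acVal (h : List g.V) : g.aValH h ≤ g.acVal h := by
  obtain ⟨σ, h1, h2⟩ := g.acVal_exists h
  rw [h2]
  exact h1.trans ((g.aVal_le_cVal σ h))

end Aux2

section Aux3
variable (g : GSRGame)

lemma compat_single (σ : g.Strat) : g.Compat σ [g.v0] := by
  refine ⟨by simp, rfl, List.isChain_singleton _, ?_⟩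
  intro p v hpre hne _
  have h1 := hpre.length_le
  simp only [List.length_append, List.length_singleton] at h1
  have : p = [] := List.length_eq_zero_iff.mp (by omega)
  exact absurd this hne

lemma chain'_last {l : List g.V} {v : g.V} (hc : List.Chain' g.E (l ++ [v])) (hne : l ≠ []) :
    g.E (l.getLast hne) v := by
  rcases List.isChain_append.mp hc with ⟨-, -, hE⟩
  exact hE _ (by simp [List.getLast?_eq_getLast hne]) v rfl

lemma playList_head? (σ τ : g.Strat) {h : List g.V} (hne : h ≠ []) (k : ℕ) :
    (g.playList σ τ h k).head? = h.head? := by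
  induction k with
  | zero => rfl
  | succ k ih =>
    rw [playList_succ, List.head?_append, ih]
    cases hh : h.head? with
    | none => exact absurd (List.head?_eq_none_iff.mp hh) hne
    | some a => simp

lemma playList_chain' (σ τ : g.Strat) {h : List g.V} (hne : h ≠ [])
    (hc : List.Chain' g.E h) (k : ℕ) : List.Chain' g.E (g.playList σ τ h k) := by
  induction k with
  | zero => exact hc
  | succ k ih =>
    rw [playList_succ]
    refine List.isChain_append.mpr ⟨ih, List.isChain_singleton _, ?_⟩
    intro x hx y hy
    have hpe := g.playList_ne_nil σ τ hne k
    rw [List.getLast?_eq_getLast hpe] at hx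
    simp at hx hy
    subst hx
    subst hy
    rw [← getLastD_eq_getLast _ hpe g.v0]
    split
    · rw [getLastD_eq_getLast _ hpe g.v0]; exact σ.valid _ hpe
    · rw [getLastD_eq_getLast _ hpe g.v0]; exact τ.valid _ hpe

lemma compat_playList (σ τ : g.Strat) {h : List g.V} (hc : g.Compat σ h) (k : ℕ) :
    g.Compat σ (g.playList σ τ h k) := by
  obtain ⟨hne, hhead, hchain, hmov⟩ := hc
  refine ⟨g.playList_ne_nil σ τ hne k, by rw [g.playList_head? σ τ hne]; exact hhead,
    g.playList_chain' σ τ hne hchain k, ?_⟩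
  intro p v hpre hpne hprot
  rcases Nat.lt_or_ge p.length h.length with hlt | hge
  · have hpre' : p ++ [v] <+: h := by
      refine List.prefix_of_prefix_length_le hpre ?_ ?_
      · exact g.playList_prefix_mono σ τ h (Nat.zero_le k)
      · simp only [List.length_append, List.length_singleton]
        omega
    exact hmov p v hpre' hpne hprot
  · have hp2 : p <+: g.playList σ τ h k := (List.prefix_append p [v]).trans hpre
    have hpeq : p = g.playList σ τ h (p.length - h.length) := g.prefix_playList σ τ hp2 hge
    set j := p.length - h.length with hjdef
    have hjk : j + 1 ≤ k := by
      have h1 := hpre.length_le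
      rw [playList_length] at h1
      simp only [List.length_append, List.length_singleton] at h1
      omega
    have hnext : g.playList σ τ h (j + 1) = p ++ [σ.act p] := by
      rw [playList_succ, ← hpeq, if_pos hprot]
    have hpl : p ++ [σ.act p] <+: g.playList σ τ h k :=
      hnext ▸ g.playList_prefix_mono σ τ h hjk
    have heq : p ++ [v] = p ++ [σ.act p] := prefix_eq_of_length hpre hpl (by simp)
    simpa using heq.symm

lemma prefix_playList_eq (σ τ : g.Strat) {h l : List g.V} {k : ℕ}
    (hp : l <+: g.playList σ τ h k) (hl : h.length ≤ l.length) :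
    l = g.playList σ τ h (l.length - h.length) := g.prefix_playList σ τ hp hl

end Aux3

section Aux4
variable (g : GSRGame)

lemma snoc_prefix_unique {l h : List g.V} {v w : g.V}
    (h1 : l ++ [v] <+: h) (h2 : l ++ [w] <+: h) : v = w := by
  have := prefix_eq_of_length h1 h2 (by simp)
  simpa using this

/-- Follow `h`, then play like `τ'`. -/
noncomputable def followStrat (h : List g.V) (hch : List.Chain' g.E h) (τ' : g.Strat) :
    g.Strat where
  act l := if hp : ∃ v, l ++ [v] <+: h then Classical.choose hp else τ'.act l
  valid l hne := by
    split
    next hp => exact g.chain'_last (hch.prefix (Classical.choose_spec hp)) hne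
    next => exact τ'.valid l hne

lemma followStrat_act_prefix {h : List g.V} (hch : List.Chain' g.E h) (τ' : g.Strat)
    {l : List g.V} {v : g.V} (hp : l ++ [v] <+: h) :
    (g.followStrat h hch τ').act l = v := by
  show (if hp : ∃ v, l ++ [v] <+: h then Classical.choose hp else τ'.act l) = v
  rw [dif_pos ⟨v, hp⟩]
  exact g.snoc_prefix_unique (Classical.choose_spec (⟨v, hp⟩ : ∃ v, l ++ [v] <+: h)) hp

lemma followStrat_act_long {h : List g.V} (hch : List.Chain' g.E h) (τ' : g.Strat)
    {l : List g.V} (hl : h.length ≤ l.length) :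
    (g.followStrat h hch τ').act l = τ'.act l := by
  show (if hp : ∃ v, l ++ [v] <+: h then Classical.choose hp else τ'.act l) = τ'.act l
  rw [dif_neg]
  rintro ⟨v, hv⟩
  have := hv.length_le
  simp only [List.length_append, List.length_singleton] at this
  omega

/-- Follow `h`, then play like `σs`; elsewhere play like `σ`. -/
noncomputable def swStrat (h : List g.V) (hch : List.Chain' g.E h) (σ σs : g.Strat) :
    g.Strat where
  act l := if hp : ∃ v, l ++ [v] <+: h then Classical.choose hp
           else if h <+: l then σs.act l else σ.act l
  valid l hne := by
    split
    next hp => exact g.chain'_last (hch.prefix (Classical.choose_spec hp)) hne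
    next =>
      split
      · exact σs.valid l hne
      · exact σ.valid l hne

lemma swStrat_act_prefix {h : List g.V} (hch : List.Chain' g.E h) (σ σs : g.Strat)
    {l : List g.V} {v : g.V} (hp : l ++ [v] <+: h) :
    (g.swStrat h hch σ σs).act l = v := by
  show (if hp : ∃ v, l ++ [v] <+: h then Classical.choose hp
        else if h <+: l then σs.act l else σ.act l) = v
  rw [dif_pos ⟨v, hp⟩]
  exact g.snoc_prefix_unique (Classical.choose_spec (⟨v, hp⟩ : ∃ v, l ++ [v] <+: h)) hp

lemma not_snoc_prefix_of_long {h l : List g.V} (hl : h.length ≤ l.length) :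
    ¬ ∃ v, l ++ [v] <+: h := by
  rintro ⟨v, hv⟩
  have := hv.length_le
  simp only [List.length_append, List.length_singleton] at this
  omega

lemma swStrat_act_ext {h : List g.V} (hch : List.Chain' g.E h) (σ σs : g.Strat)
    {l : List g.V} (hp : h <+: l) :
    (g.swStrat h hch σ σs).act l = σs.act l := by
  show (if hp : ∃ v, l ++ [v] <+: h then Classical.choose hp
        else if h <+: l then σs.act l else σ.act l) = σs.act l
  rw [dif_neg (g.not_snoc_prefix_of_long hp.length_le), if_pos hp]

lemma swStrat_act_other {h : List g.V} (hch : List.Chain' g.E h) (σ σs : g.Strat)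
    {l : List g.V} (h1 : ¬ ∃ v, l ++ [v] <+: h) (h2 : ¬ h <+: l) :
    (g.swStrat h hch σ σs).act l = σ.act l := by
  show (if hp : ∃ v, l ++ [v] <+: h then Classical.choose hp
        else if h <+: l then σs.act l else σ.act l) = σ.act l
  rw [dif_neg h1, if_neg h2]

/-- Follow `h`; after `h ++ [a]` play like `τ1`, after `h ++ [a']` play like `τ2`,
elsewhere like `τ3`. -/
noncomputable def branchStrat (h : List g.V) (hch : List.Chain' g.E h) (a a' : g.V)
    (τ1 τ2 τ3 : g.Strat) : g.Strat where
  act l := if hp : ∃ v, l ++ [v] <+: h then Classical.choose hp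
           else if h ++ [a] <+: l then τ1.act l
           else if h ++ [a'] <+: l then τ2.act l
           else τ3.act l
  valid l hne := by
    split
    next hp => exact g.chain'_last (hch.prefix (Classical.choose_spec hp)) hne
    next =>
      split
      · exact τ1.valid l hne
      split
      · exact τ2.valid l hne
      · exact τ3.valid l hne

lemma branchStrat_act_prefix {h : List g.V} (hch : List.Chain' g.E h) (a a' : g.V)
    (τ1 τ2 τ3 : g.Strat) {l : List g.V} {v : g.V} (hp : l ++ [v] <+: h) :
    (g.branchStrat h hch a a' τ1 τ2 τ3).act l = v := by
  show (if hp : ∃ v, l ++ [v] <+: h then Classical.choose hp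
        else if h ++ [a] <+: l then τ1.act l
        else if h ++ [a'] <+: l then τ2.act l
        else τ3.act l) = v
  rw [dif_pos ⟨v, hp⟩]
  exact g.snoc_prefix_unique (Classical.choose_spec (⟨v, hp⟩ : ∃ v, l ++ [v] <+: h)) hp

lemma branchStrat_act_one {h : List g.V} (hch : List.Chain' g.E h) (a a' : g.V)
    (τ1 τ2 τ3 : g.Strat) {l : List g.V} (hp : h ++ [a] <+: l) :
    (g.branchStrat h hch a a' τ1 τ2 τ3).act l = τ1.act l := by
  show (if hp : ∃ v, l ++ [v] <+: h then Classical.choose hp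
        else if h ++ [a] <+: l then τ1.act l
        else if h ++ [a'] <+: l then τ2.act l
        else τ3.act l) = τ1.act l
  have hlen : h.length ≤ l.length := by
    have := hp.length_le
    simp only [List.length_append, List.length_singleton] at this
    omega
  rw [dif_neg (g.not_snoc_prefix_of_long hlen), if_pos hp]

lemma branchStrat_act_two {h : List g.V} (hch : List.Chain' g.E h) {a a' : g.V}
    (τ1 τ2 τ3 : g.Strat) {l : List g.V} (hp : h ++ [a'] <+: l) (hne : a ≠ a') :
    (g.branchStrat h hch a a' τ1 τ2 τ3).act l = τ2.act l := by
  show (if hp : ∃ v, l ++ [v] <+: h then Classical.choose hp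
        else if h ++ [a] <+: l then τ1.act l
        else if h ++ [a'] <+: l then τ2.act l
        else τ3.act l) = τ2.act l
  have hlen : h.length ≤ l.length := by
    have := hp.length_le
    simp only [List.length_append, List.length_singleton] at this
    omega
  have hnot : ¬ h ++ [a] <+: l := by
    intro hcon
    have := prefix_eq_of_length hcon hp (by simp)
    simp at this
    exact hne this
  rw [dif_neg (g.not_snoc_prefix_of_long hlen), if_neg hnot, if_pos hp]

/-- Any strategy that follows `h` on proper prefixes of `h`, together with a strategy
compatible with `h`, reaches `h`. -/
lemma follow_reach (σ τ : g.Strat) {h : List g.V} (hc : g.Compat σ h)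
    (hτ : ∀ (l : List g.V) (v : g.V), l ++ [v] <+: h → l ≠ [] → τ.act l = v) :
    ∀ k, k < h.length → g.playList σ τ [g.v0] k = h.take (k+1) := by
  obtain ⟨hne, hhead, hchain, hmov⟩ := hc
  intro k
  induction k with
  | zero =>
    intro _
    cases h with
    | nil => exact absurd rfl hne
    | cons a t =>
      have : a = g.v0 := by simpa using hhead
      subst this
      rfl
  | succ k ih =>
    intro hlt
    have hk : k < h.length := by omega
    have IH := ih hk
    have hlt' : k + 1 < h.length := hlt
    set w := h.get ⟨k+1, hlt'⟩ with hw
    have htake : h.take (k+1) ++ [w] = h.take (k+2) := by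
      rw [← List.concat_eq_append]
      exact List.take_concat_get hlt'
    have hpre : h.take (k+1) ++ [w] <+: h := by
      rw [htake]
      exact List.take_prefix _ _
    have htne : h.take (k+1) ≠ [] := by
      apply List.ne_nil_of_length_pos
      rw [List.length_take]
      omega
    rw [playList_succ, IH]
    by_cases hprot : g.protag ((h.take (k+1)).getLastD g.v0)
    · rw [if_pos hprot, hmov _ _ hpre htne hprot, htake]
    · rw [if_neg hprot, hτ _ _ hpre htne, htake]

lemma follow_reach_full (σ τ : g.Strat) {h : List g.V} (hc : g.Compat σ h)
    (hτ : ∀ (l : List g.V) (v : g.V), l ++ [v] <+: h → l ≠ [] → τ.act l = v) :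
    g.playList σ τ [g.v0] (h.length - 1) = h := by
  have hne := hc.1
  have hpos : 0 < h.length := List.length_pos_iff.mpr hne
  have := g.follow_reach σ τ hc hτ (h.length - 1) (by omega)
  rw [this]
  have : h.length - 1 + 1 = h.length := by omega
  rw [this, List.take_length]

lemma pval_eq_of_playList_eq {σ₁ σ₂ τ₁ τ₂ : g.Strat} {h : List g.V}
    (hk : ∀ k, g.playList σ₂ τ₂ h k = g.playList σ₁ τ₁ h k) :
    g.pval σ₂ τ₂ h = g.pval σ₁ τ₁ h := by
  unfold pval play
  congr 1
  funext k
  rw [hk k]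

lemma swStrat_agree (σ σs τ : g.Strat) {h : List g.V} (hc : g.Compat σ h)
    (hch : List.Chain' g.E h) :
    ∀ k, (∀ j, j < k → g.playList σ τ [g.v0] j ≠ h) →
      g.playList (g.swStrat h hch σ σs) τ [g.v0] k = g.playList σ τ [g.v0] k := by
  intro k
  induction k with
  | zero => intro _; rfl
  | succ k ih =>
    intro hnh
    have IH := ih (fun j hj => hnh j (by omega))
    rw [playList_succ, playList_succ, IH]
    set l := g.playList σ τ [g.v0] k with hl
    by_cases hprot : g.protag (l.getLastD g.v0)
    · rw [if_pos hprot, if_pos hprot]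
      have hacts : (g.swStrat h hch σ σs).act l = σ.act l := by
        by_cases hex : ∃ v, l ++ [v] <+: h
        · obtain ⟨v, hv⟩ := hex
          rw [g.swStrat_act_prefix hch σ σs hv]
          have hlne : l ≠ [] := g.playList_ne_nil σ τ (by simp) k
          exact (hc.2.2.2 l v hv hlne hprot).symm
        · by_cases hpre : h <+: l
          · exfalso
            have hlen : h.length ≤ l.length := hpre.length_le
            have hlpl : (1 : ℕ) ≤ h.length := List.length_pos_iff.mpr hc.1
            have heq : h = g.playList σ τ [g.v0] (h.length - 1) := by
              have := g.prefix_playList σ τ (hpre.trans (List.prefix_refl l)) (by simpa using hlpl)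
              simpa using this
            have hlenl : l.length = 1 + k := by
              rw [hl, playList_length]; rfl
            exact hnh (h.length - 1) (by omega) heq.symm
          · exact g.swStrat_act_other hch σ σs hex hpre
      rw [hacts]
    · rw [if_neg hprot, if_neg hprot]

end Aux4

section Main
variable (g : GSRGame)

lemma not_admissible_of_witness (σ : g.Strat) {h : List g.V} (hc : g.Compat σ h)
    (h2 : g.cVal σ h ≤ g.aValH h)
    (h3 : g.aVal σ h < g.cVal σ h ∨ g.cVal σ h < g.aValH h ∨ g.aValH h < g.acVal h) :
    ¬ g.Admissible σ := by
  have hch : List.Chain' g.E h := hc.2.2.1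
  have hne : h ≠ [] := hc.1
  have hv0ne : ([g.v0] : List g.V) ≠ [] := by simp
  obtain ⟨σs, hσs1, hσs2⟩ := g.acVal_exists h
  set σ' := g.swStrat h hch σ σs with hσ'def
  -- σ' is compatible with h
  have hcσ' : g.Compat σ' h := by
    refine ⟨hne, hc.2.1, hch, ?_⟩
    intro p v hpre hpne _
    exact g.swStrat_act_prefix hch σ σs hpre
  -- key: values when the play reaches h
  have key : ∀ τ : g.Strat, (∃ j, g.playList σ τ [g.v0] j = h) →
      g.pval σ τ [g.v0] = g.pval σ τ h ∧ g.pval σ' τ [g.v0] = g.pval σs τ h := by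
    rintro τ ⟨j, hj⟩
    have hlenh : h.length = 1 + j := by
      rw [← hj, playList_length]
      rfl
    have hprev : ∀ j', j' < j → g.playList σ τ [g.v0] j' ≠ h := by
      intro j' hj' heq
      have : h.length = 1 + j' := by rw [← heq, playList_length]; rfl
      omega
    have hP'j : g.playList σ' τ [g.v0] j = h :=
      (g.swStrat_agree σ σs τ hc hch j hprev).trans hj
    constructor
    · have := g.pval_playList σ τ hv0ne j
      rw [hj] at this
      exact this.symm
    · have c2a : g.pval σ' τ h = g.pval σ' τ [g.v0] := by
        have := g.pval_playList σ' τ hv0ne j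
        rwa [hP'j] at this
      have c2b : g.pval σ' τ h = g.pval σs τ h := by
        refine g.pval_congr (σ₁ := σs) (τ₁ := τ) ?_ ?_
        · intro k _
          refine g.swStrat_act_ext hch σ σs ?_
          exact g.playList_prefix_mono σs τ h (Nat.zero_le k)
        · intro k _
          rfl
      rw [← c2a, c2b]
  -- weak dominance
  have hdom : g.Dom σ σ' := by
    intro τ
    by_cases hj : ∃ j, g.playList σ τ [g.v0] j = h
    · obtain ⟨c1, c2⟩ := key τ hj
      rw [c1, c2]
      calc g.pval σ τ h ≤ g.cVal σ h := g.pval_le_cVal σ τ h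
        _ ≤ g.aValH h := h2
        _ ≤ g.aVal σs h := hσs1
        _ ≤ g.pval σs τ h := g.aVal_le_pval σs τ h
    · push_neg at hj
      have heq : g.pval σ' τ [g.v0] = g.pval σ τ [g.v0] :=
        g.pval_eq_of_playList_eq (fun k => g.swStrat_agree σ σs τ hc hch k (fun j _ => hj j))
      rw [heq]
  -- strictness
  have hstrict : ∃ τ : g.Strat, g.pval σ τ [g.v0] < g.pval σ' τ [g.v0] := by
    by_cases hA : g.aVal σ h < g.cVal σ h
    · obtain ⟨τ₁, hτ₁⟩ := g.aVal_exists σ h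
      set τf := g.followStrat h hch τ₁ with hτfdef
      have hτf : ∀ (l : List g.V) (v : g.V), l ++ [v] <+: h → l ≠ [] → τf.act l = v :=
        fun l v hp _ => g.followStrat_act_prefix hch τ₁ hp
      have hreach : g.playList σ τf [g.v0] (h.length - 1) = h :=
        g.follow_reach_full σ τf hc hτf
      obtain ⟨c1, c2⟩ := key τf ⟨_, hreach⟩
      refine ⟨τf, ?_⟩
      have e1 : g.pval σ τf h = g.pval σ τ₁ h := by
        refine g.pval_congr (σ₁ := σ) (τ₁ := τ₁) (fun k _ => rfl) ?_
        intro k _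
        refine g.followStrat_act_long hch τ₁ ?_
        rw [playList_length]
        exact Nat.le_add_right _ _
      rw [c1, c2, e1, ← hτ₁]
      calc g.aVal σ h < g.cVal σ h := hA
        _ ≤ g.aValH h := h2
        _ ≤ g.aVal σs h := hσs1
        _ ≤ g.pval σs τf h := g.aVal_le_pval σs τf h
    · have hB : g.cVal σ h < g.acVal h := by
        push_neg at hA
        rcases h3 with h3 | h3 | h3
        · omega
        · exact h3.trans_le (g.aValH_le_acVal h)
        · exact lt_of_le_of_lt h2 h3
      obtain ⟨τ₂, hτ₂⟩ := g.cVal_exists σs h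
      set τf := g.followStrat h hch τ₂ with hτfdef
      have hτf : ∀ (l : List g.V) (v : g.V), l ++ [v] <+: h → l ≠ [] → τf.act l = v :=
        fun l v hp _ => g.followStrat_act_prefix hch τ₂ hp
      have hreach : g.playList σ τf [g.v0] (h.length - 1) = h :=
        g.follow_reach_full σ τf hc hτf
      obtain ⟨c1, c2⟩ := key τf ⟨_, hreach⟩
      refine ⟨τf, ?_⟩
      have e1 : g.pval σs τf h = g.pval σs τ₂ h := by
        refine g.pval_congr (σ₁ := σs) (τ₁ := τ₂) (fun k _ => rfl) ?_
        intro k _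
        refine g.followStrat_act_long hch τ₂ ?_
        rw [playList_length]
        exact Nat.le_add_right _ _
      rw [c1, c2, e1, ← hτ₂, ← hσs2]
      exact lt_of_le_of_lt (g.pval_le_cVal σ τf h) hB
  intro hadm
  exact hadm ⟨σ', hdom, hstrict⟩

lemma admissible_of_no_witness (σ : g.Strat)
    (H : ∀ h : List g.V, ¬ (g.Compat σ h ∧
        g.aVal σ h ≤ g.cVal σ h ∧ g.cVal σ h ≤ g.aValH h ∧ g.aValH h ≤ g.acVal h ∧
        (g.aVal σ h < g.cVal σ h ∨ g.cVal σ h < g.aValH h ∨ g.aValH h < g.acVal h))) :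
    g.Admissible σ := by
  rintro ⟨σ', hdom, τ, hlt⟩
  have hv0ne : ([g.v0] : List g.V) ≠ [] := by simp
  have hexk : ∃ k, g.playList σ τ [g.v0] k ≠ g.playList σ' τ [g.v0] k := by
    by_contra hcon
    push_neg at hcon
    have : g.pval σ' τ [g.v0] = g.pval σ τ [g.v0] :=
      g.pval_eq_of_playList_eq (fun k => (hcon k).symm)
    omega
  have hm0 : Nat.find hexk ≠ 0 := by
    intro h0
    have := Nat.find_spec hexk
    rw [h0] at this
    exact this rfl
  set n := Nat.find hexk - 1 with hndef
  have hn : g.playList σ τ [g.v0] n = g.playList σ' τ [g.v0] n := by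
    by_contra hcon
    exact Nat.find_min hexk (by omega) hcon
  set h := g.playList σ τ [g.v0] n with hhdef
  have hsucc : g.playList σ τ [g.v0] (n+1) ≠ g.playList σ' τ [g.v0] (n+1) := by
    have : n + 1 = Nat.find hexk := by omega
    rw [this]
    exact Nat.find_spec hexk
  have hPs : g.playList σ τ [g.v0] (n+1) =
      h ++ [if g.protag (h.getLastD g.v0) then σ.act h else τ.act h] := by
    rw [playList_succ]
  have hP's : g.playList σ' τ [g.v0] (n+1) =
      h ++ [if g.protag (h.getLastD g.v0) then σ'.act h else τ.act h] := by
    rw [playList_succ, ← hn]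
  have hprot : g.protag (h.getLastD g.v0) := by
    by_contra hnp
    apply hsucc
    rw [hPs, hP's, if_neg hnp, if_neg hnp]
  have hact : σ.act h ≠ σ'.act h := by
    intro he
    apply hsucc
    rw [hPs, hP's, if_pos hprot, if_pos hprot, he]
  have hcσ : g.Compat σ h := g.compat_playList σ τ (g.compat_single σ) n
  have hcσ' : g.Compat σ' h := by
    rw [hn]
    exact g.compat_playList σ' τ (g.compat_single σ') n
  have hne : h ≠ [] := hcσ.1
  have hch : List.Chain' g.E h := hcσ.2.2.1
  have hp1 : g.pval σ τ h = g.pval σ τ [g.v0] := g.pval_playList σ τ hv0ne n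
  have hp2 : g.pval σ' τ h = g.pval σ' τ [g.v0] := by
    rw [hn]
    exact g.pval_playList σ' τ hv0ne n
  have hlt' : g.pval σ τ h < g.pval σ' τ h := by rw [hp1, hp2]; exact hlt
  by_cases hC : g.cVal σ h ≤ g.aValH h
  · -- all values equal
    have hstr : ¬ (g.aVal σ h < g.cVal σ h ∨ g.cVal σ h < g.aValH h ∨ g.aValH h < g.acVal h) :=
      fun hd => H h ⟨hcσ, g.aVal_le_cVal σ h, hC, g.aValH_le_acVal h, hd⟩
    push_neg at hstr
    obtain ⟨e1, e2, e3⟩ := hstr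
    have eq1 : g.aVal σ h = g.cVal σ h := le_antisymm (g.aVal_le_cVal σ h) e1
    have eq2 : g.cVal σ h = g.aValH h := le_antisymm hC e2
    have eq3 : g.aValH h = g.acVal h := le_antisymm (g.aValH_le_acVal h) e3
    have hpσ : g.pval σ τ h = g.aValH h := by
      have l1 := g.aVal_le_pval σ τ h
      have l2 := g.pval_le_cVal σ τ h
      omega
    have hcσ'big : g.acVal h < g.cVal σ' h := by
      have := g.pval_le_cVal σ' τ h
      omega
    have haσ' : g.aVal σ' h < g.aValH h := by
      by_contra hge
      push_neg at hge
      have := g.cVal_le_acVal hge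
      omega
    obtain ⟨τmin, hτmin⟩ := g.aVal_exists σ' h
    set τf := g.followStrat h hch τmin with hτfdef
    have hτf : ∀ (l : List g.V) (v : g.V), l ++ [v] <+: h → l ≠ [] → τf.act l = v :=
      fun l v hp _ => g.followStrat_act_prefix hch τmin hp
    have hr : g.playList σ' τf [g.v0] (h.length - 1) = h := g.follow_reach_full σ' τf hcσ' hτf
    have hrσ : g.playList σ τf [g.v0] (h.length - 1) = h := g.follow_reach_full σ τf hcσ hτf
    have q1 : g.pval σ τf h = g.pval σ τf [g.v0] := by
      have := g.pval_playList σ τf hv0ne (h.length - 1)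
      rwa [hrσ] at this
    have q2 : g.pval σ' τf h = g.pval σ' τf [g.v0] := by
      have := g.pval_playList σ' τf hv0ne (h.length - 1)
      rwa [hr] at this
    have q3 : g.pval σ' τf h = g.pval σ' τmin h := by
      refine g.pval_congr (σ₁ := σ') (τ₁ := τmin) (fun k _ => rfl) ?_
      intro k _
      refine g.followStrat_act_long hch τmin ?_
      have := g.playList_length σ' τmin h k
      omega
    have q4 : g.aVal σ h ≤ g.pval σ τf h := g.aVal_le_pval σ τf h
    have hd := hdom τf
    rw [← q1, ← q2, q3, ← hτmin] at hd
    omega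
  · -- cVal σ h > aValH h
    push_neg at hC
    obtain ⟨τmax, hτmax⟩ := g.cVal_exists σ h
    obtain ⟨τmin, hτmin⟩ := g.aVal_exists σ' h
    set a := σ.act h with hadef
    set a' := σ'.act h with ha'def
    set τf := g.branchStrat h hch a a' τmax τmin τmax with hτfdef
    have hτf : ∀ (l : List g.V) (v : g.V), l ++ [v] <+: h → l ≠ [] → τf.act l = v :=
      fun l v hp _ => g.branchStrat_act_prefix hch a a' τmax τmin τmax hp
    have hr : g.playList σ' τf [g.v0] (h.length - 1) = h := g.follow_reach_full σ' τf hcσ' hτf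
    have hrσ : g.playList σ τf [g.v0] (h.length - 1) = h := g.follow_reach_full σ τf hcσ hτf
    have q1 : g.pval σ τf h = g.pval σ τf [g.v0] := by
      have := g.pval_playList σ τf hv0ne (h.length - 1)
      rwa [hrσ] at this
    have q2 : g.pval σ' τf h = g.pval σ' τf [g.v0] := by
      have := g.pval_playList σ' τf hv0ne (h.length - 1)
      rwa [hr] at this
    have hstep1 : g.playList σ τmax h 1 = h ++ [a] := by
      rw [playList_succ]
      show h ++ [if g.protag (h.getLastD g.v0) then σ.act h else τmax.act h] = h ++ [a]
      rw [if_pos hprot]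
    have hstep1' : g.playList σ' τmin h 1 = h ++ [a'] := by
      rw [playList_succ]
      show h ++ [if g.protag (h.getLastD g.v0) then σ'.act h else τmin.act h] = h ++ [a']
      rw [if_pos hprot]
    have q3 : g.pval σ τf h = g.pval σ τmax h := by
      refine g.pval_congr (σ₁ := σ) (τ₁ := τmax) (fun k _ => rfl) ?_
      intro k hk
      cases k with
      | zero => exact absurd hprot hk
      | succ k =>
        refine g.branchStrat_act_one hch a a' τmax τmin τmax ?_
        rw [← hstep1]
        exact g.playList_prefix_mono σ τmax h (by omega)
    have q4 : g.pval σ' τf h = g.pval σ' τmin h := by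
      refine g.pval_congr (σ₁ := σ') (τ₁ := τmin) (fun k _ => rfl) ?_
      intro k hk
      cases k with
      | zero => exact absurd hprot hk
      | succ k =>
        refine g.branchStrat_act_two hch τmax τmin τmax ?_ hact
        rw [← hstep1']
        exact g.playList_prefix_mono σ' τmin h (by omega)
    have hd := hdom τf
    rw [← q1, ← q2, q3, q4, ← hτmax, ← hτmin] at hd
    have := g.aVal_le_aValH σ' h
    omega
end Main
end GSRGame

/-- `σ` is not admissible iff there is a history `h` compatible with `σ` such
that `aVal(h, σ) ≤ cVal(h, σ) ≤ aVal(h) ≤ acVal(h)` with at least one inequality strict. -/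
theorem stmt14 (g : GSRGame) (σ : g.Strat) :
    ¬ g.Admissible σ ↔
      ∃ h : List g.V, g.Compat σ h ∧
        g.aVal σ h ≤ g.cVal σ h ∧ g.cVal σ h ≤ g.aValH h ∧ g.aValH h ≤ g.acVal h ∧
        (g.aVal σ h < g.cVal σ h ∨ g.cVal σ h < g.aValH h ∨ g.aValH h < g.acVal h) := by
  constructor
  · intro hna
    by_contra hcon
    push_neg at hcon
    refine hna (g.admissible_of_no_witness σ ?_)
    rintro h ⟨h1, h2, h3, h4, h5⟩
    obtain ⟨e1, e2, e3⟩ := hcon h h1 h2 h3 h4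
    omega
  · rintro ⟨h, hc, _, h2, _, h3⟩
    exact g.not_admissible_of_witness σ hc h2 h3
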